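/- For any tree T with cost function c, threshold t ∈ ℝ≥0, subtree T' of T, and heavy module H of T with respect to t: if H ∩ V(T') is nonempty then H ∩ V(T') induces a connected subtree of T'. Consequently, each heavy module of T contributes at most one heavy module to T', giving k(T', c, t) ≤ k(T, c, t). -/

import Mathlib

open SimpleGraph

/-- A rooted decision tree: a query vertex together with a list of subtrees. -/
inductive DT (V : Type) : Type
  | node : V → List (DT V) → DT V

namespace DT

variable {V : Type} [DecidableEq V]

/-- The set of vertices (queries) appearing in a decision tree. -/
def verts : DT V → Finset V
  | .node q ch => insert q ((ch.attach.map fun d => verts d.1).foldr (· ∪ ·) ∅)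
decreasing_by simp only [DT.node.sizeOf_spec]; have := List.sizeOf_lt_of_mem d.2; omega

/-- The depth of a decision tree: the maximum number of queries on a
root-to-leaf path. -/
def depth : DT V → ℕ
  | .node _ ch => 1 + ((ch.attach.map fun d => depth d.1).foldr max 0)
decreasing_by simp only [DT.node.sizeOf_spec]; have := List.sizeOf_lt_of_mem d.2; omega

/-- Total cost of the queries on the path from the root to target `x`. -/
def costTo (c : V → ℝ) : DT V → V → ℝ
  | .node q ch, x =>
      c q + if x = q then 0
        else ((ch.attach.map fun d => if x ∈ verts d.1 then costTo c d.1 x else 0).sum)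
decreasing_by simp only [DT.node.sizeOf_spec]; have := List.sizeOf_lt_of_mem d.2; omega

/-- `u` is a (weak) ancestor of `x` in the decision tree: `x` lies in the
subtree rooted at the node querying `u`. -/
def Ancestor : DT V → V → V → Prop
  | .node q ch, u, x =>
      (u = q ∧ x ∈ verts (DT.node q ch)) ∨ ∃ d ∈ ch.attach, Ancestor d.1 u x
decreasing_by simp only [DT.node.sizeOf_spec]; have := List.sizeOf_lt_of_mem d.2; omega

/-- Validity of a decision tree with respect to a graph `G` and a candidate
set `S`: the root query belongs to `S`, and the children correspond exactly to
the distinct connected components of the induced graph on `S` minus the query. -/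
def IsValidOn (G : SimpleGraph V) : DT V → Finset V → Prop
  | .node q ch, S =>
      q ∈ S ∧
      (∀ d ∈ ch, (verts d) ⊆ S.erase q ∧ (verts d).Nonempty ∧
        ((G.induce (verts d : Set V)).Connected) ∧
        (∀ u ∈ verts d, ∀ v ∈ S.erase q, v ∉ verts d → ¬ G.Adj u v)) ∧
      (∀ v ∈ S.erase q, ∃ d ∈ ch, v ∈ verts d) ∧
      (∀ d ∈ ch, ∀ d' ∈ ch, d ≠ d' → Disjoint (verts d) (verts d')) ∧
      (∀ d ∈ ch.attach, IsValidOn G d.1 (verts d.1))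
termination_by D _ => sizeOf D
decreasing_by simp only [DT.node.sizeOf_spec]; have := List.sizeOf_lt_of_mem d.2; omega

/-- `D` is a (complete) decision tree for the tree `G` on a finite vertex set. -/
def IsDecisionTree [Fintype V] (G : SimpleGraph V) (D : DT V) : Prop :=
  IsValidOn G D Finset.univ

/-- A partial decision tree: a prefix of a decision tree (same root, each
child is a prefix of a corresponding child of the full tree). -/
def IsPrefixOf : DT V → DT V → Prop
  | .node q' ch', .node q ch =>
      q' = q ∧ ∀ d' ∈ ch'.attach, ∃ d ∈ ch, IsPrefixOf d'.1 d
termination_by D _ => sizeOf D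
decreasing_by simp only [DT.node.sizeOf_spec]; have := List.sizeOf_lt_of_mem d'.2; omega

/-- Worst-case total query cost of a decision tree. -/
noncomputable def COST (c : V → ℝ) (D : DT V) : ℝ :=
  sSup { r | ∃ x ∈ verts D, costTo c D x = r }

/-- Optimal worst-case cost of searching in the tree `G` with query costs `c`. -/
noncomputable def OPT [Fintype V] (G : SimpleGraph V) (c : V → ℝ) : ℝ :=
  sInf { r | ∃ D : DT V, IsDecisionTree G D ∧ COST c D = r }

end DT

/-- `H` is a heavy module of `G` w.r.t. threshold `t`: a maximal vertex set
inducing a connected subgraph all of whose vertices have cost exceeding `t`. -/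
def IsHeavyModule {V : Type} (G : SimpleGraph V) (c : V → ℝ) (t : ℝ) (H : Set V) : Prop :=
  (G.induce H).Connected ∧ (∀ v ∈ H, t < c v) ∧
    ∀ H' : Set V, H ⊆ H' → (G.induce H').Connected → (∀ v ∈ H', t < c v) → H' = H

/-- The number `k(T,c,t)` of heavy modules with respect to threshold `t`. -/
noncomputable def numHeavy {V : Type} (G : SimpleGraph V) (c : V → ℝ) (t : ℝ) : ℕ :=
  {H : Set V | IsHeavyModule G c t H}.ncard

/-- The up-modularity parameter `k(T,c)`: the maximum over all thresholds
`t ≥ 0` of the number of heavy modules. -/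
noncomputable def kval {V : Type} (G : SimpleGraph V) (c : V → ℝ) : ℕ :=
  sSup {m : ℕ | ∃ t : ℝ, 0 ≤ t ∧ m = numHeavy G c t}


section Aux
open SimpleGraph
variable {V : Type} (G : SimpleGraph V)

lemma reach_induce_of_walk {A : Set V} : ∀ {a b : V} (w : G.Walk a b)
    (_ : ∀ x ∈ w.support, x ∈ A) (ha : a ∈ A) (hb : b ∈ A),
    (G.induce A).Reachable ⟨a, ha⟩ ⟨b, hb⟩ := by
  intro a b w
  induction w with
  | nil => intro _ ha _; rfl
  | @cons u v w h p ih =>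
    intro hsup ha hb
    have hc : v ∈ A := hsup v (by simp [SimpleGraph.Walk.support_cons])
    exact (SimpleGraph.Adj.reachable (by exact h : (G.induce A).Adj ⟨u, ha⟩ ⟨v, hc⟩)).trans
      (ih (fun x hx => hsup x (by simp [SimpleGraph.Walk.support_cons, hx])) hc hb)

lemma tree_path_support (hG : G.IsTree) {A : Set V} (hA : (G.induce A).Connected)
    {a b : V} (ha : a ∈ A) (hb : b ∈ A) (p : G.Walk a b) (hp : p.IsPath) :
    ∀ x ∈ p.support, x ∈ A := by
  classical
  obtain ⟨w⟩ := hA ⟨a, ha⟩ ⟨b, hb⟩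
  have hsub : ∀ x ∈ (w.map (Embedding.induce A).toHom).support, x ∈ A := by
    intro x hx
    rw [Walk.support_map] at hx
    obtain ⟨y, _, rfl⟩ := List.mem_map.mp hx
    exact y.2
  have huniq := hG.existsUnique_path a b
  have heq : p = (w.map (Embedding.induce A).toHom).toPath.1 :=
    huniq.unique hp (w.map (Embedding.induce A).toHom).toPath.2
  rw [heq]
  exact fun x hx => hsub x (Walk.support_toPath_subset _ hx)

lemma tree_inter_connected (hG : G.IsTree) {A B : Set V}
    (hA : (G.induce A).Connected) (hB : (G.induce B).Connected)
    (hne : (A ∩ B).Nonempty) : (G.induce (A ∩ B)).Connected := by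
  classical
  rw [SimpleGraph.connected_iff]
  refine ⟨?_, ?_⟩
  · rintro ⟨a, haA, haB⟩ ⟨b, hbA, hbB⟩
    obtain ⟨w⟩ := hA ⟨a, haA⟩ ⟨b, hbA⟩
    set p := (w.map (Embedding.induce A).toHom).toPath
    have hpA : ∀ x ∈ (p.1 : G.Walk a b).support, x ∈ A := by
      intro x hx
      have := Walk.support_toPath_subset (w.map (Embedding.induce A).toHom) hx
      rw [Walk.support_map] at this
      obtain ⟨y, _, rfl⟩ := List.mem_map.mp this
      exact y.2
    have hpB : ∀ x ∈ (p.1 : G.Walk a b).support, x ∈ B :=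
      tree_path_support G hG hB haB hbB p.1 p.2
    exact reach_induce_of_walk G p.1 (fun x hx => Set.mem_inter (hpA x hx) (hpB x hx)) _ _
  · exact ⟨⟨hne.choose, hne.choose_spec⟩⟩

/-- Isomorphism between a doubly-induced subgraph and the induced subgraph on the image. -/
noncomputable def indIso (S : Set V) (A : Set (Subtype (· ∈ S))) :
    (G.induce S).induce A ≃g G.induce (Subtype.val '' A) where
  toEquiv := Equiv.Set.image Subtype.val A Subtype.val_injective
  map_rel_iff' := Iff.rfl

end Aux

lemma heavyExtend {V : Type} [Fintype V] (G : SimpleGraph V) (c : V → ℝ) (t : ℝ) {B : Set V}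
    (hBc : (G.induce B).Connected) (hBh : ∀ v ∈ B, t < c v) :
    ∃ M, IsHeavyModule G c t M ∧ B ⊆ M := by
  classical
  set s : Set (Set V) := {M | B ⊆ M ∧ (SimpleGraph.induce M G).Connected ∧ ∀ v ∈ M, t < c v}
    with hs
  have hne : s.Nonempty := ⟨B, subset_rfl, hBc, hBh⟩
  obtain ⟨M, hMs, hmax⟩ := Set.Finite.exists_maximalFor id s (Set.toFinite s) hne
  refine ⟨M, ⟨hMs.2.1, hMs.2.2, ?_⟩, hMs.1⟩
  intro H' hsub hconn hheavy
  exact le_antisymm (hmax ⟨hMs.1.trans hsub, hconn, hheavy⟩ hsub) hsub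

/-- For a heavy module `H` of `T` w.r.t. `t` and a subtree `T'`
(induced on `S`): if `H ∩ S` is nonempty then it induces a connected subgraph,
and consequently `k(T',c,t) ≤ k(T,c,t)`. -/
theorem stmt5 {V : Type} [Fintype V] (G : SimpleGraph V) (hG : G.IsTree)
    (c : V → ℝ) (hpos : ∀ v, 0 < c v) (t : ℝ) (ht : 0 ≤ t)
    (S : Set V) (hS : (G.induce S).Connected)
    (H : Set V) (hH : IsHeavyModule G c t H) :
    ((H ∩ S).Nonempty → (G.induce (H ∩ S)).Connected) ∧
      numHeavy (G.induce S) (fun v => c v.1) t ≤ numHeavy G c t := by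
  classical
  constructor
  · exact fun hne => tree_inter_connected G hG hH.1 hS hne
  · -- map each heavy module of `G.induce S` to a heavy module of `G` containing its image
    set f : Set (Subtype (· ∈ S)) → Set V := fun H' =>
      if h : ∃ M, IsHeavyModule G c t M ∧ Subtype.val '' H' ⊆ M then h.choose else ∅ with hf
    have key : ∀ H' ∈ {A : Set (Subtype (· ∈ S)) |
        IsHeavyModule (G.induce S) (fun v => c v.1) t A},
        IsHeavyModule G c t (f H') ∧ Subtype.val '' H' ⊆ f H' ∧
          (Subtype.val ⁻¹' (f H') : Set (Subtype (· ∈ S))) = H' := by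
      intro H' hH'
      have hBc : (G.induce (Subtype.val '' H')).Connected :=
        ((indIso G S H').connected_iff).mp hH'.1
      have hBh : ∀ v ∈ Subtype.val '' H', t < c v := by
        rintro v ⟨y, hy, rfl⟩; exact hH'.2.1 y hy
      have hex : ∃ M, IsHeavyModule G c t M ∧ Subtype.val '' H' ⊆ M :=
        heavyExtend G c t hBc hBh
      have hfe : f H' = hex.choose := dif_pos hex
      obtain ⟨hM, hsub⟩ := hex.choose_spec
      rw [hfe]
      refine ⟨hM, hsub, ?_⟩
      -- the preimage equals `H'` by maximality of `H'`
      set A : Set (Subtype (· ∈ S)) := Subtype.val ⁻¹' hex.choose with hA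
      have himg : Subtype.val '' A = hex.choose ∩ S := by
        ext x
        constructor
        · rintro ⟨y, hy, rfl⟩; exact ⟨hy, y.2⟩
        · rintro ⟨hxM, hxS⟩; exact ⟨⟨x, hxS⟩, hxM, rfl⟩
      have hne : (hex.choose ∩ S).Nonempty := by
        obtain ⟨⟨y, hy⟩⟩ := hH'.1.nonempty
        exact ⟨y.1, hsub ⟨y, hy, rfl⟩, y.2⟩
      have hconn : ((G.induce S).induce A).Connected := by
        rw [(indIso G S A).connected_iff, himg]
        exact tree_inter_connected G hG hM.1 hS hne
      have hsubA : H' ⊆ A := fun y hy => hsub ⟨y, hy, rfl⟩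
      have hheavyA : ∀ v ∈ A, t < c v.1 := fun v hv => hM.2.1 v.1 hv
      exact hH'.2.2 A hsubA hconn hheavyA
    refine Set.ncard_le_ncard_of_injOn f (fun H' hH' => (key H' hH').1) ?_ (Set.toFinite _)
    intro H1 h1 H2 h2 heq
    have e1 := (key H1 h1).2.2
    have e2 := (key H2 h2).2.2
    rw [← e1, ← e2, heq]
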